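/- If X and Y are n×k matrices with X^T X = Y^T Y = I_k and ‖X - Y‖_F² < 3, then the matrix I_k + X^T Y is invertible and its spectral condition number σ_max/σ_min is at most 2(3 - ‖X - Y‖_F²)^{-1/2}. -/

import Mathlib

open Matrix

/-- Squared Frobenius norm of a matrix. -/
noncomputable def frobSq {n k : ℕ} (A : Matrix (Fin n) (Fin k) ℝ) : ℝ :=
  ∑ i, ∑ j, (A i j) ^ 2

/-- Euclidean norm of a vector. -/
noncomputable def enorm {k : ℕ} (v : Fin k → ℝ) : ℝ :=
  Real.sqrt (∑ i, (v i) ^ 2)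

/-- The spectral condition number (sup over unit vectors of ‖Mz‖)/(inf over unit
vectors of ‖Mz‖). -/
noncomputable def condNum {k : ℕ} (M : Matrix (Fin k) (Fin k) ℝ) : ℝ :=
  (⨆ z : {z : Fin k → ℝ // _root_.enorm z = 1}, _root_.enorm (M.mulVec z)) /
    (⨅ z : {z : Fin k → ℝ // _root_.enorm z = 1}, _root_.enorm (M.mulVec z))

namespace Stmt1Aux

lemma enorm_nonneg {k : ℕ} (v : Fin k → ℝ) : 0 ≤ _root_.enorm v := Real.sqrt_nonneg _

lemma sum_sq_nonneg {k : ℕ} (v : Fin k → ℝ) : 0 ≤ ∑ i, (v i) ^ 2 :=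
  Finset.sum_nonneg fun _ _ => sq_nonneg _

lemma sq_enorm {k : ℕ} (v : Fin k → ℝ) : _root_.enorm v ^ 2 = ∑ i, (v i) ^ 2 :=
  Real.sq_sqrt (sum_sq_nonneg v)

lemma dot_self {k : ℕ} (v : Fin k → ℝ) : v ⬝ᵥ v = ∑ i, (v i) ^ 2 := by
  simp [dotProduct, sq]

/-- Cauchy–Schwarz for dot products in terms of `enorm`. -/
lemma dot_le_enorm_mul {k : ℕ} (v w : Fin k → ℝ) : v ⬝ᵥ w ≤ _root_.enorm v * _root_.enorm w := by
  have h := Finset.sum_mul_sq_le_sq_mul_sq Finset.univ v w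
  have h2 : v ⬝ᵥ w ≤ Real.sqrt ((∑ i, (v i)^2) * (∑ i, (w i)^2)) := by
    calc v ⬝ᵥ w ≤ |v ⬝ᵥ w| := le_abs_self _
    _ = Real.sqrt ((v ⬝ᵥ w)^2) := (Real.sqrt_sq_eq_abs _).symm
    _ ≤ Real.sqrt ((∑ i, (v i)^2) * (∑ i, (w i)^2)) := Real.sqrt_le_sqrt (by
        simpa [dotProduct] using h)
  simpa [_root_.enorm, Real.sqrt_mul (sum_sq_nonneg v)] using h2

/-- Adjoint identity. -/
lemma mulVec_dot_mulVec {n k : ℕ} (X Y : Matrix (Fin n) (Fin k) ℝ) (z w : Fin k → ℝ) :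
    (X.mulVec z) ⬝ᵥ (Y.mulVec w) = z ⬝ᵥ ((Xᵀ * Y).mulVec w) := by
  rw [← Matrix.mulVec_mulVec, dotProduct_mulVec z Xᵀ, vecMul_transpose]

/-- Adjoint identity, rectangular version. -/
lemma mulVec_dot {n k : ℕ} (A : Matrix (Fin n) (Fin k) ℝ) (v : Fin k → ℝ) (w : Fin n → ℝ) :
    (A.mulVec v) ⬝ᵥ w = v ⬝ᵥ (Aᵀ.mulVec w) := by
  rw [dotProduct_mulVec v Aᵀ w, vecMul_transpose]

lemma enorm_mulVec_orth {n k : ℕ} {X : Matrix (Fin n) (Fin k) ℝ} (hX : Xᵀ * X = 1)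
    (z : Fin k → ℝ) : _root_.enorm (X.mulVec z) = _root_.enorm z := by
  unfold _root_.enorm
  congr 1
  have := mulVec_dot_mulVec X X z z
  rw [hX, Matrix.one_mulVec, dot_self, dot_self] at this
  linarith

/-- Frobenius bound on `mulVec`. -/
lemma enorm_mulVec_sq_le {n k : ℕ} (A : Matrix (Fin n) (Fin k) ℝ) (z : Fin k → ℝ) :
    _root_.enorm (A.mulVec z) ^ 2 ≤ frobSq A * _root_.enorm z ^ 2 := by
  rw [sq_enorm, sq_enorm, frobSq, Finset.sum_mul]
  apply Finset.sum_le_sum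
  intro i _
  simpa [Matrix.mulVec, dotProduct] using
    Finset.sum_mul_sq_le_sq_mul_sq Finset.univ (fun j => A i j) z

/-- ‖Xᵀ w‖ ≤ ‖w‖ when X has orthonormal columns. -/
lemma enorm_transpose_mulVec_le {n k : ℕ} {X : Matrix (Fin n) (Fin k) ℝ} (hX : Xᵀ * X = 1)
    (w : Fin n → ℝ) : _root_.enorm (Xᵀ.mulVec w) ≤ _root_.enorm w := by
  set u := Xᵀ.mulVec w with hu
  have key : _root_.enorm u ^ 2 ≤ _root_.enorm u * _root_.enorm w := by
    have h1 : (X.mulVec u) ⬝ᵥ w = u ⬝ᵥ u := by rw [mulVec_dot, ← hu]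
    have h2 : (X.mulVec u) ⬝ᵥ w ≤ _root_.enorm (X.mulVec u) * _root_.enorm w := dot_le_enorm_mul _ _
    rw [h1, enorm_mulVec_orth hX] at h2
    rw [sq_enorm, ← dot_self]
    exact h2
  rcases eq_or_lt_of_le (enorm_nonneg u) with h | h
  · rw [← h]; exact enorm_nonneg w
  · have := key
    rw [sq] at this
    exact le_of_mul_le_mul_left this h

/-- Triangle inequality for enorm. -/
lemma enorm_add_le {k : ℕ} (v w : Fin k → ℝ) : _root_.enorm (v + w) ≤ _root_.enorm v + _root_.enorm w := by
  have hcs := dot_le_enorm_mul v w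
  have hv := sq_enorm v
  have hw := sq_enorm w
  have hdot : v ⬝ᵥ w = ∑ i, v i * w i := rfl
  have hvw : ∑ i, ((v + w) i) ^ 2 ≤ (_root_.enorm v + _root_.enorm w) ^ 2 := by
    have hexp : ∑ i, ((v + w) i) ^ 2
        = (∑ i, (v i)^2) + 2 * (∑ i, v i * w i) + (∑ i, (w i)^2) := by
      rw [Finset.mul_sum, ← Finset.sum_add_distrib, ← Finset.sum_add_distrib]
      exact Finset.sum_congr rfl fun i _ => by simp [Pi.add_apply]; ring
    rw [hexp]
    nlinarith [enorm_nonneg v, enorm_nonneg w]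
  calc _root_.enorm (v + w) = Real.sqrt (∑ i, ((v + w) i) ^ 2) := rfl
  _ ≤ Real.sqrt ((_root_.enorm v + _root_.enorm w) ^ 2) := Real.sqrt_le_sqrt hvw
  _ = _root_.enorm v + _root_.enorm w := Real.sqrt_sq (add_nonneg (enorm_nonneg v) (enorm_nonneg w))

lemma enorm_smul {k : ℕ} (c : ℝ) (v : Fin k → ℝ) : _root_.enorm (c • v) = |c| * _root_.enorm v := by
  unfold _root_.enorm
  rw [← Real.sqrt_sq_eq_abs, ← Real.sqrt_mul (sq_nonneg c), Finset.mul_sum]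
  congr 1
  exact Finset.sum_congr rfl fun i _ => by simp [mul_pow]

lemma frobSq_nonneg {n k : ℕ} (A : Matrix (Fin n) (Fin k) ℝ) : 0 ≤ frobSq A :=
  Finset.sum_nonneg fun _ _ => sum_sq_nonneg _

end Stmt1Aux

open Stmt1Aux in
theorem stmt1 {n k : ℕ} (hk : 0 < k) (X Y : Matrix (Fin n) (Fin k) ℝ)
    (hX : Xᵀ * X = 1) (hY : Yᵀ * Y = 1)
    (hclose : frobSq (X - Y) < 3) :
    IsUnit (1 + Xᵀ * Y) ∧
      condNum (1 + Xᵀ * Y) ≤ 2 * (Real.sqrt (3 - frobSq (X - Y)))⁻¹ := by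
  set f := frobSq (X - Y) with hf
  have hf0 : 0 ≤ f := frobSq_nonneg _
  set M := (1 : Matrix (Fin k) (Fin k) ℝ) + Xᵀ * Y with hM
  haveI : NeZero k := ⟨hk.ne'⟩
  -- a unit vector exists
  have hunit : _root_.enorm ((Pi.single (0 : Fin k) 1 : Fin k → ℝ)) = 1 := by
    unfold _root_.enorm
    have : ∑ i, ((Pi.single (0 : Fin k) 1 : Fin k → ℝ) i)^2 = 1 := by
      rw [Finset.sum_eq_single 0]
      · simp
      · intro b _ hb; simp [Pi.single_apply, hb]
      · simp
    rw [this, Real.sqrt_one]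
  haveI hne : Nonempty {z : Fin k → ℝ // _root_.enorm z = 1} := ⟨⟨_, hunit⟩⟩
  have hsqrt_pos : 0 < Real.sqrt (3 - f) := Real.sqrt_pos.mpr (by linarith)
  -- lower bound for unit vectors
  have hlow : ∀ z : Fin k → ℝ, _root_.enorm z = 1 → Real.sqrt (3 - f) ≤ _root_.enorm (M.mulVec z) := by
    intro z hz
    have hzz : ∑ i, (z i)^2 = 1 := by
      have := sq_enorm z; rw [hz] at this; simpa using this.symm
    have hcross : (X.mulVec z) ⬝ᵥ (Y.mulVec z) ≥ 1 - f / 2 := by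
      have hXz : _root_.enorm (X.mulVec z) = 1 := by rw [enorm_mulVec_orth hX, hz]
      have hYz : _root_.enorm (Y.mulVec z) = 1 := by rw [enorm_mulVec_orth hY, hz]
      have hdiff : _root_.enorm ((X - Y).mulVec z) ^ 2 ≤ f := by
        have := enorm_mulVec_sq_le (X - Y) z
        rw [hz] at this; simpa using this
      have hexp : _root_.enorm ((X - Y).mulVec z) ^ 2
          = _root_.enorm (X.mulVec z) ^ 2 + _root_.enorm (Y.mulVec z) ^ 2
            - 2 * ((X.mulVec z) ⬝ᵥ (Y.mulVec z)) := by
        rw [sq_enorm, sq_enorm, sq_enorm, ← dot_self, Matrix.sub_mulVec]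
        simp only [dotProduct, Pi.sub_apply]
        rw [Finset.mul_sum, ← Finset.sum_add_distrib, ← Finset.sum_sub_distrib]
        exact Finset.sum_congr rfl fun i _ => by ring
      rw [hXz, hYz] at hexp
      nlinarith
    have hquad : z ⬝ᵥ M.mulVec z = 1 + (X.mulVec z) ⬝ᵥ (Y.mulVec z) := by
      rw [hM, Matrix.add_mulVec, Matrix.one_mulVec, dotProduct_add,
        ← mulVec_dot_mulVec, dot_self, hzz]
    have hCS : z ⬝ᵥ M.mulVec z ≤ _root_.enorm (M.mulVec z) := by
      have := dot_le_enorm_mul z (M.mulVec z)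
      rwa [hz, one_mul] at this
    have h1 : 2 - f / 2 ≤ _root_.enorm (M.mulVec z) := by
      rw [hquad] at hCS; linarith
    have h2 : Real.sqrt (3 - f) ≤ 2 - f / 2 := by
      calc Real.sqrt (3 - f) ≤ Real.sqrt ((2 - f/2)^2) := Real.sqrt_le_sqrt (by nlinarith [sq_nonneg (1 - f/2)])
      _ = 2 - f / 2 := Real.sqrt_sq (by linarith)
    linarith
  -- upper bound for unit vectors
  have hupp : ∀ z : Fin k → ℝ, _root_.enorm z = 1 → _root_.enorm (M.mulVec z) ≤ 2 := by
    intro z hz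
    have hMz : M.mulVec z = z + Xᵀ.mulVec (Y.mulVec z) := by
      rw [hM, Matrix.add_mulVec, Matrix.one_mulVec, Matrix.mulVec_mulVec]
    rw [hMz]
    have h1 : _root_.enorm (Xᵀ.mulVec (Y.mulVec z)) ≤ 1 := by
      calc _root_.enorm (Xᵀ.mulVec (Y.mulVec z)) ≤ _root_.enorm (Y.mulVec z) :=
            enorm_transpose_mulVec_le hX _
      _ = 1 := by rw [enorm_mulVec_orth hY, hz]
    calc _root_.enorm (z + Xᵀ.mulVec (Y.mulVec z)) ≤ _root_.enorm z + _root_.enorm (Xᵀ.mulVec (Y.mulVec z)) :=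
          enorm_add_le _ _
    _ ≤ 2 := by rw [hz]; linarith
  -- no nonzero kernel vector
  have hker : ∀ v : Fin k → ℝ, v ≠ 0 → M.mulVec v ≠ 0 := by
    intro v hv0 hv
    have hev : 0 < _root_.enorm v := by
      rcases (enorm_nonneg v).lt_or_eq with h | h
      · exact h
      · exfalso; apply hv0
        have hs : ∑ i, (v i)^2 = 0 := by
          have := sq_enorm v; rw [← h] at this; simpa using this.symm
        funext i
        have := (Finset.sum_eq_zero_iff_of_nonneg
          (fun i _ => sq_nonneg (v i))).mp hs i (Finset.mem_univ i)
        exact pow_eq_zero_iff (n := 2) (by norm_num) |>.mp this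
    set u := (_root_.enorm v)⁻¹ • v with hu
    have huu : _root_.enorm u = 1 := by
      rw [hu, enorm_smul, abs_of_pos (by positivity)]
      field_simp
    have hMu : M.mulVec u = 0 := by
      rw [hu, Matrix.mulVec_smul, hv, smul_zero]
    have hl := hlow u huu
    have h0 : _root_.enorm (0 : Fin k → ℝ) = 0 := by simp [_root_.enorm]
    rw [hMu, h0] at hl
    linarith
  have hdet : M.det ≠ 0 := by
    intro h
    obtain ⟨v, hv0, hv⟩ := (Matrix.exists_mulVec_eq_zero_iff).mpr h
    exact hker v hv0 hv
  have hMunit : IsUnit M := (Matrix.isUnit_iff_isUnit_det M).mpr (isUnit_iff_ne_zero.mpr hdet)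
  refine ⟨hMunit, ?_⟩
  have hS : (⨆ z : {z : Fin k → ℝ // _root_.enorm z = 1}, _root_.enorm (M.mulVec z)) ≤ 2 :=
    ciSup_le fun z => hupp z z.2
  have hI : Real.sqrt (3 - f) ≤ ⨅ z : {z : Fin k → ℝ // _root_.enorm z = 1}, _root_.enorm (M.mulVec z) :=
    le_ciInf fun z => hlow z z.2
  unfold condNum
  calc (⨆ z : {z : Fin k → ℝ // _root_.enorm z = 1}, _root_.enorm (M.mulVec z)) /
      (⨅ z : {z : Fin k → ℝ // _root_.enorm z = 1}, _root_.enorm (M.mulVec z))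
      ≤ 2 / Real.sqrt (3 - f) := div_le_div₀ (by norm_num) hS hsqrt_pos hI
  _ = 2 * (Real.sqrt (3 - f))⁻¹ := div_eq_mul_inv _ _
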